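/- Let ‖·‖_Z denote the norm on Z = X × Y given by the Minkowski functional of 𝔻 (so that 𝔻 is the open unit ball of ‖·‖_Z). Let h : 𝔻₁ → X and Γ(h,·) : 𝔻₁ → L(Y) be Fréchet differentiable and suppose: (i) sup_{x∈𝔻₁} ‖h'(x)‖_{L(X)}·(1−‖x‖²) < ∞; (ii) sup_{x∈𝔻₁} ‖Γ(h,x)‖_{L(Y)}·(1−‖x‖²) < ∞; (iii) sup_{x∈𝔻₁} ‖(∂/∂x)Γ(h,x)‖_{L(X,L(Y))}·p(‖x‖)·(1−‖x‖²) < ∞. Then the extension Φ[h](x,y) := (h(x), Γ(h,x)y) satisfies sup_{(x,y)∈𝔻} ‖Φ[h]'(x,y)‖_{L(Z)}·(1−‖(x,y)‖_Z²) < ∞, where Φ[h]'(x,y) denotes the Fréchet derivative of Φ[h] at (x,y) and its operator norm is taken with respect to ‖·‖_Z. -/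

import Mathlib

open Set Filter Topology

set_option maxHeartbeats 1000000 in
/-- Bloch-type property of the extension (Proposition 6.1): if `h` and `Γ(h,·)` are
Fréchet differentiable on `𝔻₁` with (i) `sup ‖h'(x)‖(1−‖x‖²) < ∞`,
(ii) `sup ‖Γ(h,x)‖(1−‖x‖²) < ∞`, (iii) `sup ‖∂ₓΓ(h,x)‖ p(‖x‖)(1−‖x‖²) < ∞`, then the
extension `Φ[h](x,y) = (h x, Γ(h,x) y)` satisfies
`sup_{(x,y)∈𝔻} ‖Φ[h]'(x,y)‖_{L(Z)} (1−‖(x,y)‖_Z²) < ∞`, where `‖·‖_Z` is the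
Minkowski functional (gauge) of `𝔻` and the operator norm of `T = Φ[h]'(x,y)` with
respect to `‖·‖_Z` is computed as the supremum of `gauge 𝔻 (T ζ)` over `ζ ∈ 𝔻`. -/
theorem stmt_16 {X Y : Type*} [NormedAddCommGroup X] [NormedSpace ℂ X] [CompleteSpace X]
    [NormedAddCommGroup Y] [NormedSpace ℂ Y] [CompleteSpace Y]
    (p : ℝ → ℝ)
    (hp_cont : ContinuousOn p (Icc 0 1))
    (hp_maps : ∀ s ∈ Icc (0:ℝ) 1, p s ∈ Icc (0:ℝ) 1)
    (hp0 : p 0 = 1) (hp1 : p 1 = 0)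
    (hp_anti : StrictAntiOn p (Icc 0 1))
    (hp_conc : ∀ s₁ ∈ Icc (0:ℝ) 1, ∀ s₂ ∈ Icc (0:ℝ) 1,
      (p s₁ + p s₂) / 2 ≤ p ((s₁ + s₂) / 2))
    (D : Set (X × Y))
    (hD : D = {z : X × Y | ‖z.1‖ < 1 ∧ ‖z.2‖ < 1 ∧ ‖z.2‖ < p ‖z.1‖})
    (h : X → X) (Γ : X → Y →L[ℂ] Y)
    (hdiff : ∀ x : X, ‖x‖ < 1 → DifferentiableAt ℂ h x)
    (hΓdiff : ∀ x : X, ‖x‖ < 1 → DifferentiableAt ℂ Γ x)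
    (M₁ : ℝ) (hM₁ : ∀ x : X, ‖x‖ < 1 → ‖fderiv ℂ h x‖ * (1 - ‖x‖ ^ 2) ≤ M₁)
    (M₂ : ℝ) (hM₂ : ∀ x : X, ‖x‖ < 1 → ‖Γ x‖ * (1 - ‖x‖ ^ 2) ≤ M₂)
    (M₃ : ℝ) (hM₃ : ∀ x : X, ‖x‖ < 1 →
      ‖fderiv ℂ Γ x‖ * p ‖x‖ * (1 - ‖x‖ ^ 2) ≤ M₃)
    (Φ : X × Y → X × Y)
    (hΦ : ∀ z : X × Y, Φ z = (h z.1, Γ z.1 z.2)) :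
    ∃ M : ℝ, ∀ z ∈ D, ∀ ζ ∈ D,
      gauge D (fderiv ℂ Φ z ζ) * (1 - gauge D z ^ 2) ≤ M := by
  -- find a small ball inside D
  have hc0 : ContinuousWithinAt p (Icc 0 1) 0 := hp_cont 0 (by norm_num)
  have hev : ∀ᶠ s in 𝓝[Icc (0:ℝ) 1] 0, 1/2 < p s :=
    hc0.eventually_const_lt (by rw [hp0]; norm_num)
  obtain ⟨δ, hδ, hball⟩ := Metric.mem_nhdsWithin_iff.mp hev
  set r : ℝ := min δ (1/2) with hr_def
  have hr : 0 < r := lt_min hδ (by norm_num)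
  have hr2 : r ≤ 1/2 := min_le_right _ _
  have hsub : Metric.ball (0 : X × Y) r ⊆ D := by
    rintro ⟨a, b⟩ hab
    rw [Metric.mem_ball, dist_zero_right, Prod.norm_def, max_lt_iff] at hab
    obtain ⟨ha, hb⟩ := hab
    have ha1 : ‖a‖ < 1 := ha.trans_le (hr2.trans (by norm_num))
    have hpa : 1/2 < p ‖a‖ := by
      refine hball ⟨?_, ?_⟩
      · rw [Metric.mem_ball, Real.dist_eq, sub_zero, abs_of_nonneg (norm_nonneg a)]
        exact ha.trans_le (min_le_left _ _)
      · exact ⟨norm_nonneg a, ha1.le⟩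
    rw [hD]
    exact ⟨ha1, hb.trans_le (hr2.trans (by norm_num)),
      (hb.trans_le hr2).trans hpa⟩
  have habs : Absorbent ℝ (Metric.ball (0 : X × Y) r) := absorbent_ball_zero hr
  have hgauge_le : ∀ w : X × Y, gauge D w ≤ ‖w‖ / r := fun w => by
    calc gauge D w ≤ gauge (Metric.ball (0 : X × Y) r) w := gauge_mono habs hsub w
    _ = ‖w‖ / r := gauge_ball hr.le w
  refine ⟨(2 / r) * max M₁ (M₂ + M₃), ?_⟩
  intro z hz ζ hζ
  have hzD := hz
  rw [hD] at hz hζ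
  obtain ⟨hz1, hz2, hz3⟩ := hz
  obtain ⟨hζ1, hζ2, hζ3⟩ := hζ
  -- gauge facts
  have hg1 : gauge D z ≤ 1 := gauge_le_one_of_mem hzD
  have hg0 : 0 ≤ gauge D z := gauge_nonneg z
  have hgz : ‖z.1‖ ≤ gauge D z := by
    refine le_csInf ⟨1, one_pos, ⟨z, hzD, one_smul ℝ z⟩⟩ ?_
    rintro b ⟨hb, w, hw, rfl⟩
    rw [hD] at hw
    have : ‖(b • w).1‖ = b * ‖w.1‖ := by
      simp [Prod.smul_fst, norm_smul, abs_of_pos hb]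
    rw [this]
    nlinarith [hw.1, norm_nonneg w.1]
  -- derivative of Φ
  have hΦeq : Φ = fun w : X × Y => (h w.1, Γ w.1 w.2) := funext hΦ
  have h1 : HasFDerivAt (fun w : X × Y => h w.1)
      ((fderiv ℂ h z.1).comp (ContinuousLinearMap.fst ℂ X Y)) z :=
    ((hdiff z.1 hz1).hasFDerivAt).comp z hasFDerivAt_fst
  have hc : HasFDerivAt (fun w : X × Y => Γ w.1)
      ((fderiv ℂ Γ z.1).comp (ContinuousLinearMap.fst ℂ X Y)) z :=
    ((hΓdiff z.1 hz1).hasFDerivAt).comp z hasFDerivAt_fst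
  have h2 : HasFDerivAt (fun w : X × Y => Γ w.1 w.2)
      ((Γ z.1).comp (ContinuousLinearMap.snd ℂ X Y) +
        ((fderiv ℂ Γ z.1).comp (ContinuousLinearMap.fst ℂ X Y)).flip z.2) z :=
    hc.clm_apply hasFDerivAt_snd
  have hT : HasFDerivAt Φ
      (((fderiv ℂ h z.1).comp (ContinuousLinearMap.fst ℂ X Y)).prod
        ((Γ z.1).comp (ContinuousLinearMap.snd ℂ X Y) +
          ((fderiv ℂ Γ z.1).comp (ContinuousLinearMap.fst ℂ X Y)).flip z.2)) z := by
    rw [hΦeq]; exact HasFDerivAt.prodMk h1 h2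
  have hfd : fderiv ℂ Φ z ζ =
      (fderiv ℂ h z.1 ζ.1, Γ z.1 ζ.2 + fderiv ℂ Γ z.1 ζ.1 z.2) := by
    rw [hT.fderiv]
    simp
  have hc0' : (0:ℝ) ≤ 1 - ‖z.1‖ ^ 2 := by nlinarith [norm_nonneg z.1]
  have hb1 : ‖fderiv ℂ h z.1 ζ.1‖ * (1 - ‖z.1‖ ^ 2) ≤ M₁ := by
    refine le_trans (mul_le_mul_of_nonneg_right ?_ hc0') (hM₁ z.1 hz1)
    exact ((fderiv ℂ h z.1).le_opNorm ζ.1).trans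
      (mul_le_of_le_one_right (norm_nonneg _) hζ1.le)
  have hb2 : ‖Γ z.1 ζ.2 + fderiv ℂ Γ z.1 ζ.1 z.2‖ * (1 - ‖z.1‖ ^ 2) ≤ M₂ + M₃ := by
    have e1 : ‖Γ z.1 ζ.2 + fderiv ℂ Γ z.1 ζ.1 z.2‖ ≤
        ‖Γ z.1‖ * ‖ζ.2‖ + ‖fderiv ℂ Γ z.1‖ * ‖ζ.1‖ * ‖z.2‖ := by
      refine (norm_add_le _ _).trans (add_le_add ((Γ z.1).le_opNorm ζ.2) ?_)
      calc ‖fderiv ℂ Γ z.1 ζ.1 z.2‖ ≤ ‖fderiv ℂ Γ z.1 ζ.1‖ * ‖z.2‖ :=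
          (fderiv ℂ Γ z.1 ζ.1).le_opNorm z.2
      _ ≤ ‖fderiv ℂ Γ z.1‖ * ‖ζ.1‖ * ‖z.2‖ := by
          gcongr; exact (fderiv ℂ Γ z.1).le_opNorm ζ.1
    have hpz : 0 ≤ p ‖z.1‖ := le_trans (norm_nonneg z.2) hz3.le
    have e4 : ‖Γ z.1‖ * ‖ζ.2‖ * (1 - ‖z.1‖ ^ 2) ≤ M₂ := by
      refine le_trans (mul_le_mul_of_nonneg_right ?_ hc0') (hM₂ z.1 hz1)
      exact mul_le_of_le_one_right (norm_nonneg _) hζ2.le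
    have e5 : ‖fderiv ℂ Γ z.1‖ * ‖ζ.1‖ * ‖z.2‖ * (1 - ‖z.1‖ ^ 2) ≤ M₃ := by
      refine le_trans (mul_le_mul_of_nonneg_right ?_ hc0') (hM₃ z.1 hz1)
      calc ‖fderiv ℂ Γ z.1‖ * ‖ζ.1‖ * ‖z.2‖
          ≤ ‖fderiv ℂ Γ z.1‖ * ‖z.2‖ :=
            mul_le_mul_of_nonneg_right
              (mul_le_of_le_one_right (by positivity) hζ1.le) (norm_nonneg _)
      _ ≤ ‖fderiv ℂ Γ z.1‖ * p ‖z.1‖ :=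
            mul_le_mul_of_nonneg_left hz3.le (by positivity)
    calc ‖Γ z.1 ζ.2 + fderiv ℂ Γ z.1 ζ.1 z.2‖ * (1 - ‖z.1‖ ^ 2)
        ≤ (‖Γ z.1‖ * ‖ζ.2‖ + ‖fderiv ℂ Γ z.1‖ * ‖ζ.1‖ * ‖z.2‖) * (1 - ‖z.1‖ ^ 2) :=
          mul_le_mul_of_nonneg_right e1 hc0'
    _ = ‖Γ z.1‖ * ‖ζ.2‖ * (1 - ‖z.1‖ ^ 2)
          + ‖fderiv ℂ Γ z.1‖ * ‖ζ.1‖ * ‖z.2‖ * (1 - ‖z.1‖ ^ 2) := by ring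
    _ ≤ M₂ + M₃ := add_le_add e4 e5
  have hbound : ‖fderiv ℂ Φ z ζ‖ * (1 - ‖z.1‖ ^ 2) ≤ max M₁ (M₂ + M₃) := by
    have hn : ‖fderiv ℂ Φ z ζ‖ =
        max ‖fderiv ℂ h z.1 ζ.1‖ ‖Γ z.1 ζ.2 + fderiv ℂ Γ z.1 ζ.1 z.2‖ := by
      rw [hfd, Prod.norm_def]
    rw [hn, max_mul_of_nonneg _ _ hc0']
    exact max_le (hb1.trans (le_max_left _ _)) (hb2.trans (le_max_right _ _))
  -- conclude
  have h2c : 1 - gauge D z ^ 2 ≤ 2 * (1 - ‖z.1‖ ^ 2) := by nlinarith [norm_nonneg z.1]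
  have h1g : 0 ≤ 1 - gauge D z ^ 2 := by nlinarith
  calc gauge D (fderiv ℂ Φ z ζ) * (1 - gauge D z ^ 2)
      ≤ (‖fderiv ℂ Φ z ζ‖ / r) * (2 * (1 - ‖z.1‖ ^ 2)) :=
        mul_le_mul (hgauge_le _) h2c h1g (div_nonneg (norm_nonneg _) hr.le)
    _ = (2 / r) * (‖fderiv ℂ Φ z ζ‖ * (1 - ‖z.1‖ ^ 2)) := by ring
    _ ≤ (2 / r) * max M₁ (M₂ + M₃) := by
        apply mul_le_mul_of_nonneg_left hbound
        positivity
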